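/- Let m > 2 and let f, g : (Fin m → ZMod 2) → ZMod 4 be two distinct bent functions. Then the Lee distance between f and g is at least 2^(m/2) (natural-number division, equal to 2^{⌊m/2⌋}); that is, ∑_{x} min ((f x − g x).val) (4 − (f x − g x).val) ≥ 2^(m/2). In particular every quaternary constant-amplitude code of length 2^m has minimum Lee distance at least 2^{⌊m/2⌋}. -/

import Mathlib

set_option maxHeartbeats 1000000 in
example : True := trivial

open Complex Finset

/-- The Fourier transform of a `ZMod 4`-valued generalized Boolean function. -/
noncomputable def fourier4 {m : ℕ} (f : (Fin m → ZMod 2) → ZMod 4) (u : Fin m → ZMod 2) : ℂ :=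
  ∑ x : Fin m → ZMod 2, Complex.I ^ (f x).val * (-1 : ℂ) ^ (∑ j, u j * x j).val

private lemma int_sq_add_sq (m : ℕ) :
    ∀ a b : ℤ, a^2 + b^2 = 4^m → (2:ℤ)^m ∣ a ∧ (2:ℤ)^m ∣ b := by
  induction m with
  | zero => intro a b _; simp
  | succ n ih =>
    intro a b h
    have h4 : (4:ℤ)^(n+1) = 4*4^n := by ring
    rcases Int.even_or_odd a with ⟨p, hp⟩ | ⟨p, hp⟩ <;>
      rcases Int.even_or_odd b with ⟨q, hq⟩ | ⟨q, hq⟩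
    · subst hp hq
      have h' : p^2 + q^2 = 4^n := by nlinarith [h, h4]
      obtain ⟨⟨k, hk⟩, ⟨l, hl⟩⟩ := ih p q h'
      exact ⟨⟨k, by rw [hk]; ring⟩, ⟨l, by rw [hl]; ring⟩⟩
    · exfalso
      have : 4*p^2 + 4*q^2 + 4*q + 1 = 4*4^n := by rw [← h4, ← h, hp, hq]; ring
      omega
    · exfalso
      have : 4*p^2 + 4*p + 4*q^2 + 1 = 4*4^n := by rw [← h4, ← h, hp, hq]; ring
      omega
    · exfalso
      have : 4*p^2 + 4*p + 4*q^2 + 4*q + 2 = 4*4^n := by rw [← h4, ← h, hp, hq]; ring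
      omega

private lemma gauss_pow (v : ℕ) : ∃ a b : ℤ, (I:ℂ)^v = a + b*I := by
  induction v with
  | zero => exact ⟨1, 0, by norm_num⟩
  | succ n ih =>
    obtain ⟨a, b, hab⟩ := ih
    exact ⟨-b, a, by rw [pow_succ, hab]; push_cast; ring_nf; rw [Complex.I_sq]; ring⟩

private lemma gauss_term (v e : ℕ) : ∃ a b : ℤ, (I:ℂ)^v * (-1:ℂ)^e = a + b*I := by
  obtain ⟨a, b, hab⟩ := gauss_pow v
  rcases Nat.even_or_odd e with he | he
  · exact ⟨a, b, by rw [he.neg_one_pow, hab]; ring⟩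
  · exact ⟨-a, -b, by rw [he.neg_one_pow, hab]; push_cast; ring⟩

private lemma lattice {m : ℕ} (f : (Fin m → ZMod 2) → ZMod 4) (u : Fin m → ZMod 2) :
    ∃ a b : ℤ, fourier4 f u = a + b*I := by
  unfold fourier4
  refine Finset.sum_induction _ (fun z => ∃ a b : ℤ, z = a + b*I) ?_ ⟨0, 0, by norm_num⟩ ?_
  · rintro x y ⟨a, b, hab⟩ ⟨c, d, hcd⟩
    exact ⟨a + c, b + d, by rw [hab, hcd]; push_cast; ring⟩
  · intro x _
    exact gauss_term _ _

private lemma normSq_int (a b : ℤ) :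
    Complex.normSq ((a:ℂ) + b*I) = ((a^2 + b^2 : ℤ) : ℝ) := by
  rw [Complex.normSq_apply]
  simp
  ring

private lemma chi_add (s t : ZMod 2) : (-1:ℂ)^(s+t).val = (-1:ℂ)^s.val * (-1:ℂ)^t.val := by
  rw [ZMod.val_add, ← pow_add, neg_one_pow_eq_pow_mod_two (R := ℂ) (s.val + t.val)]

private lemma chi_succ (s : ZMod 2) : (-1:ℂ)^(s+1).val = -((-1:ℂ)^s.val) := by
  rw [chi_add, ZMod.val_one]; ring

private lemma orth {m : ℕ} (z : Fin m → ZMod 2) :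
    ∑ u : Fin m → ZMod 2, (-1:ℂ)^(∑ j, u j * z j).val
      = if z = 0 then (2:ℂ)^m else 0 := by
  split_ifs with hz
  · subst hz
    simp only [Pi.zero_apply, mul_zero, Finset.sum_const_zero, ZMod.val_zero, pow_zero]
    simp [Finset.card_univ]
  · obtain ⟨j0, hj0⟩ : ∃ j0, z j0 ≠ 0 := by
      by_contra hc; push_neg at hc; exact hz (funext hc)
    have hall : ∀ t : ZMod 2, t ≠ 0 → t = 1 := by decide
    have hz1 : z j0 = 1 := hall _ hj0
    apply Finset.sum_ninvolution (fun u => Function.update u j0 (u j0 + 1))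
    · intro u
      have key : (∑ j, (Function.update u j0 (u j0 + 1)) j * z j)
          = (∑ j, u j * z j) + 1 := by
        rw [← Finset.add_sum_erase _ _ (Finset.mem_univ j0),
            ← Finset.add_sum_erase _ (fun j => u j * z j) (Finset.mem_univ j0)]
        have he : ∀ j ∈ Finset.univ.erase j0,
            (Function.update u j0 (u j0 + 1)) j * z j = u j * z j := by
          intro j hj
          rw [Function.update_of_ne (Finset.ne_of_mem_erase hj)]
        rw [Finset.sum_congr rfl he, Function.update_self, hz1]
        ring
      rw [key, chi_succ]
      ring
    · intro u _ hu
      have h2 := congrFun hu j0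
      simp only [Function.update_self] at h2
      have h' : u j0 + 1 = u j0 + 0 := by simpa using h2
      exact one_ne_zero (add_left_cancel h')
    · intro u; exact Finset.mem_univ _
    · intro u
      funext j
      by_cases hj : j = j0
      · subst hj
        simp [Function.update_self, add_assoc, show ((1+1:ZMod 2)) = 0 from rfl]
      · simp [Function.update_of_ne hj]

private lemma inv_pt {m : ℕ} (f : (Fin m → ZMod 2) → ZMod 4) (x : Fin m → ZMod 2) :
    ∑ u : Fin m → ZMod 2, fourier4 f u * (-1:ℂ)^(∑ j, u j * x j).val
      = (2:ℂ)^m * I^(f x).val := by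
  unfold fourier4
  simp_rw [Finset.sum_mul]
  rw [Finset.sum_comm]
  have step : ∀ (y u : Fin m → ZMod 2),
      (I:ℂ)^(f y).val * (-1:ℂ)^(∑ j, u j * y j).val * (-1:ℂ)^(∑ j, u j * x j).val
      = I^(f y).val * (-1:ℂ)^(∑ j, u j * (y + x) j).val := by
    intro y u
    have hsum : (∑ j, u j * y j) + (∑ j, u j * x j) = ∑ j, u j * (y + x) j := by
      rw [← Finset.sum_add_distrib]
      exact Finset.sum_congr rfl fun j _ => by simp [Pi.add_apply, mul_add]
    rw [mul_assoc, ← chi_add, hsum]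
  have hyx : ∀ y : Fin m → ZMod 2, y + x = 0 ↔ y = x := by
    intro y
    constructor
    · intro h; funext j
      have h2 := congrFun h j
      revert h2
      have hd : ∀ a b : ZMod 2, a + b = 0 → a = b := by decide
      exact hd _ _
    · intro h; subst h; funext j
      have hd : ∀ a : ZMod 2, a + a = 0 := by decide
      exact hd _
  have h2 : ∀ y : Fin m → ZMod 2,
      (∑ u : Fin m → ZMod 2,
        (I:ℂ)^(f y).val * (-1:ℂ)^(∑ j, u j * y j).val * (-1:ℂ)^(∑ j, u j * x j).val)
      = if y = x then (2:ℂ)^m * (I:ℂ)^(f y).val else 0 := by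
    intro y
    rw [Finset.sum_congr rfl fun u _ => step y u, ← Finset.mul_sum, orth]
    by_cases hy : y = x <;>
      simp [hy, hyx y, mul_comm, show ∀ a : ZMod 2, a + a = 0 from by decide,
        funext fun j => (by exact (by decide : ∀ a : ZMod 2, a + a = 0) (x j)
          : (x + x) j = (0 : Fin m → ZMod 2) j)]
  rw [Finset.sum_congr rfl fun y _ => h2 y, Finset.sum_ite_eq' Finset.univ x
    (fun y => (2:ℂ)^m * (I:ℂ)^(f y).val)]
  simp

private lemma I_pow_mod (x : ℕ) : (I:ℂ)^x = I^(x % 4) := by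
  conv_lhs => rw [← Nat.div_add_mod x 4]
  rw [pow_add, pow_mul, Complex.I_pow_four, one_pow, one_mul]

private lemma I_pow_split (a b : ZMod 4) : (I:ℂ)^a.val = I^b.val * I^((a-b).val) := by
  have h : b + (a - b) = a := by ring
  conv_lhs => rw [← h]
  rw [ZMod.val_add, ← I_pow_mod, pow_add]

private lemma pow_I_inj (a b : ZMod 4) (h : (I:ℂ)^a.val = I^b.val) : a = b := by
  rw [I_pow_split a b] at h
  have hb : (I:ℂ)^b.val ≠ 0 := pow_ne_zero _ Complex.I_ne_zero
  have h2 : (I:ℂ)^((a-b).val) = 1 :=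
    mul_left_cancel₀ hb (h.trans (mul_one _).symm)
  have hlt : (a-b).val < 4 := ZMod.val_lt _
  have h0 : (a-b).val = 0 := by
    set v := (a-b).val with hv
    interval_cases v
    · rfl
    · rw [pow_one] at h2; norm_num [Complex.ext_iff] at h2
    · rw [Complex.I_sq] at h2; norm_num at h2
    · rw [pow_succ, Complex.I_sq] at h2
      have : (I:ℂ) = -1 := by linear_combination -h2
      norm_num [Complex.ext_iff] at this
  have hab : a - b = 0 := by rwa [ZMod.val_eq_zero] at h0
  linear_combination hab

private lemma pt_bound (a b : ZMod 4) :
    ‖(I:ℂ)^a.val - I^b.val‖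
      ≤ Real.sqrt 2 * ((min (a-b).val (4-(a-b).val) : ℕ) : ℝ) := by
  have hsplit : (I:ℂ)^a.val - I^b.val = I^b.val * (I^((a-b).val) - 1) := by
    rw [mul_sub, mul_one, ← I_pow_split]
  rw [hsplit, norm_mul, norm_pow, Complex.norm_I, one_pow, one_mul]
  have habs : ∀ z : ℂ, ∀ c : ℝ, 0 ≤ c → Complex.normSq z ≤ 2 * c^2 →
      ‖z‖ ≤ Real.sqrt 2 * c := by
    intro z c hc hn
    calc ‖z‖ = Real.sqrt (Complex.normSq z) := by rw [Complex.norm_def]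
      _ ≤ Real.sqrt (2 * c^2) := Real.sqrt_le_sqrt hn
      _ = Real.sqrt 2 * c := by rw [Real.sqrt_mul (by norm_num), Real.sqrt_sq hc]
  apply habs _ _ (by positivity)
  have hlt : (a-b).val < 4 := ZMod.val_lt _
  set v := (a-b).val with hv
  interval_cases v <;>
    norm_num [Complex.normSq_apply, pow_succ, Complex.I_re, Complex.I_im]

set_option maxHeartbeats 1000000 in
/-- Two distinct `ZMod 4`-valued bent functions in `m > 2` variables have Lee distance at
least `2^⌊m/2⌋`; hence every quaternary constant-amplitude code of length `2^m` has minimum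
Lee distance at least `2^⌊m/2⌋`. -/
theorem stmt6 (m : ℕ) (hm : 2 < m) (f g : (Fin m → ZMod 2) → ZMod 4) (hfg : f ≠ g)
    (hf : ∀ u, Complex.normSq (fourier4 f u) = 2 ^ m)
    (hg : ∀ u, Complex.normSq (fourier4 g u) = 2 ^ m) :
    2 ^ (m / 2) ≤
      ∑ x : Fin m → ZMod 2, min (f x - g x).val (4 - (f x - g x).val) := by
  by_contra hcon
  push_neg at hcon
  set d : ℕ := ∑ x : Fin m → ZMod 2, min (f x - g x).val (4 - (f x - g x).val) with hd
  -- numeric fact : 2 * d^2 < 2^(m+1)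
  have hdsq : d^2 < 2^m := by
    calc d^2 < (2^(m/2))^2 := Nat.pow_lt_pow_left hcon (by norm_num)
      _ = 2^(m/2*2) := by rw [pow_mul]
      _ ≤ 2^m := Nat.pow_le_pow_right (by norm_num) (by omega)
  -- upper bound on the Fourier difference
  have hub : ∀ u : Fin m → ZMod 2,
      ‖fourier4 f u - fourier4 g u‖ ≤ Real.sqrt 2 * (d:ℝ) := by
    intro u
    have hdiff : fourier4 f u - fourier4 g u
        = ∑ x : Fin m → ZMod 2,
            ((I:ℂ)^(f x).val - I^(g x).val) * (-1:ℂ)^(∑ j, u j * x j).val := by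
      unfold fourier4
      rw [← Finset.sum_sub_distrib]
      exact Finset.sum_congr rfl fun x _ => by ring
    rw [hdiff]
    calc ‖∑ x : Fin m → ZMod 2,
            ((I:ℂ)^(f x).val - I^(g x).val) * (-1:ℂ)^(∑ j, u j * x j).val‖
        ≤ ∑ x : Fin m → ZMod 2, ‖
            ((I:ℂ)^(f x).val - I^(g x).val) * (-1:ℂ)^(∑ j, u j * x j).val‖ :=
          norm_sum_le _ _
      _ ≤ ∑ x : Fin m → ZMod 2,
            Real.sqrt 2 * ((min ((f x - g x)).val (4-((f x - g x)).val) : ℕ) : ℝ) := by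
          apply Finset.sum_le_sum
          intro x _
          have h1 : ‖((I:ℂ)^(f x).val - I^(g x).val)
                * (-1:ℂ)^(∑ j, u j * x j).val‖
              = ‖(I:ℂ)^(f x).val - I^(g x).val‖ := by
            rw [norm_mul, norm_pow]
            norm_num
          rw [h1]
          exact pt_bound (f x) (g x)
      _ = Real.sqrt 2 * (d:ℝ) := by
          rw [← Finset.mul_sum, hd]
          push_cast
          ring
  -- hence the Fourier transforms agree
  have hkey : ∀ u : Fin m → ZMod 2, fourier4 f u = fourier4 g u := by
    intro u
    by_contra hne
    obtain ⟨a, b, hab⟩ := lattice f u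
    obtain ⟨c, e, hce⟩ := lattice g u
    have hfab : a^2 + b^2 = 2^m := by
      have h1 : ((a^2 + b^2 : ℤ) : ℝ) = ((2^m : ℤ) : ℝ) := by
        rw [← normSq_int, ← hab, hf u]; push_cast; ring
      exact_mod_cast h1
    have hgce : c^2 + e^2 = 2^m := by
      have h1 : ((c^2 + e^2 : ℤ) : ℝ) = ((2^m : ℤ) : ℝ) := by
        rw [← normSq_int, ← hce, hg u]; push_cast; ring
      exact_mod_cast h1
    set p : ℤ := a*c + b*e with hp
    set q : ℤ := b*c - a*e with hq
    have hpq : p^2 + q^2 = 4^m := by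
      have : p^2 + q^2 = (a^2+b^2) * (c^2+e^2) := by rw [hp, hq]; ring
      rw [this, hfab, hgce, ← pow_add, ← two_mul, pow_mul]
      norm_num
    obtain ⟨hp2, -⟩ := int_sq_add_sq m p q hpq
    have h4m : (4:ℤ)^m = (2^m)^2 := by rw [← pow_mul, pow_mul']; norm_num
    have h2mpos : (0:ℤ) < 2^m := pow_pos (by norm_num) m
    have hpsq : p^2 ≤ (2^m)^2 := by nlinarith [sq_nonneg q]
    have hple : p ≤ 2^m := by nlinarith [hpsq, h2mpos, sq_nonneg (p - 2^m), sq_nonneg (p + 2^m)]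
    have hpne : p ≠ 2^m := by
      intro hpeq
      have hq0 : q = 0 := by nlinarith [sq_nonneg q]
      have hdz : (a-c)^2 + (b-e)^2 = 0 := by
        have : (a-c)^2 + (b-e)^2 = (a^2+b^2) + (c^2+e^2) - 2*p := by rw [hp]; ring
        rw [this, hfab, hgce, hpeq]; ring
      have hac : a = c := by nlinarith [sq_nonneg (a-c), sq_nonneg (b-e)]
      have hbe : b = e := by nlinarith [sq_nonneg (a-c), sq_nonneg (b-e)]
      exact hne (by rw [hab, hce, hac, hbe])
    have hplez : p ≤ 0 := by
      obtain ⟨k, hk⟩ := hp2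
      rcases le_or_gt k 0 with hk0 | hk0
      · rw [hk]
        exact mul_nonpos_of_nonneg_of_nonpos (by positivity) hk0
      · exfalso
        have : (1:ℤ) ≤ k := hk0
        have hge : (2:ℤ)^m ≤ p := by
          calc (2:ℤ)^m = 2^m * 1 := by ring
            _ ≤ 2^m * k := by
                apply mul_le_mul_of_nonneg_left this (by positivity)
            _ = p := hk.symm
        exact hpne (le_antisymm hple hge)
    -- lower bound on normSq of the difference
    have hlow : (2:ℝ)^(m+1) ≤ Complex.normSq (fourier4 f u - fourier4 g u) := by
      have hdiff2 : fourier4 f u - fourier4 g u = ((a - c : ℤ):ℂ) + ((b - e : ℤ):ℂ)*I := by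
        rw [hab, hce]; push_cast; ring
      rw [hdiff2, normSq_int]
      have hint : (2:ℤ)^(m+1) ≤ (a-c)^2 + (b-e)^2 := by
        have : (a-c)^2 + (b-e)^2 = (a^2+b^2) + (c^2+e^2) - 2*p := by rw [hp]; ring
        rw [this, hfab, hgce]
        have : (2:ℤ)^(m+1) = 2^m + 2^m := by ring
        omega
      calc (2:ℝ)^(m+1) = (((2:ℤ)^(m+1) : ℤ) : ℝ) := by push_cast; ring
        _ ≤ (((a-c)^2 + (b-e)^2 : ℤ) : ℝ) := by exact_mod_cast hint
    -- combine with upper bound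
    have hup2 : Complex.normSq (fourier4 f u - fourier4 g u) ≤ 2 * (d:ℝ)^2 := by
      have h1 : Complex.normSq (fourier4 f u - fourier4 g u)
          = (‖fourier4 f u - fourier4 g u‖)^2 := (Complex.sq_norm _).symm
      rw [h1]
      calc (‖fourier4 f u - fourier4 g u‖)^2
          ≤ (Real.sqrt 2 * (d:ℝ))^2 := by
            apply pow_le_pow_left₀ (norm_nonneg _) (hub u)
        _ = 2 * (d:ℝ)^2 := by
            rw [mul_pow, Real.sq_sqrt (by norm_num : (0:ℝ) ≤ 2)]
    have hreal : (d:ℝ)^2 < (2:ℝ)^m := by exact_mod_cast hdsq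
    have : (2:ℝ)^(m+1) ≤ 2*(d:ℝ)^2 := le_trans hlow hup2
    rw [pow_succ] at this
    linarith
  -- Fourier inversion gives f = g
  apply hfg
  funext x
  have hfx := inv_pt f x
  have hgx := inv_pt g x
  have heq : (2:ℂ)^m * I^(f x).val = (2:ℂ)^m * I^(g x).val := by
    rw [← hfx, ← hgx]
    exact Finset.sum_congr rfl fun u _ => by rw [hkey u]
  have h2m : ((2:ℂ)^m) ≠ 0 := pow_ne_zero _ (by norm_num)
  exact pow_I_inj _ _ (mul_left_cancel₀ h2m heq)
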